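/- arXiv:1709.07630 — 6 statements merged into one kernel-verified Lean document; each statement's English description precedes it below -/
import Mathlib

section
/- Let M₁,...,Mₙ be i.i.d. nonnegative integer-valued random variables with common probability generating function φ, and let i ≥ 1. Then E[(M₁)_i / (Σ_{l=1}^n M_l)_i] = (1/Γ(i)) ∫₀¹ (1-z)^(i-1) φ(z)^(n-1) φ^(i)(z) dz, with the convention that the ratio is 0 when Σ M_l < i (interpreting (m)_i/( s)_i with s ≥ m appropriately: the summand (m₁)_i/(m₁+m)_i vanishes when m₁ < i). -/
open MeasureTheory Finset ENNReal



noncomputable def gser (p : PMF ℕ) (k : ℕ) (z : ℝ) : ℝ :=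
  ∑' m : ℕ, (p m).toReal * (m.descFactorial k : ℝ) * z ^ (m - k)

lemma ptoReal_le_one (p : PMF ℕ) (m : ℕ) : (p m).toReal ≤ 1 := by
  have := ENNReal.toReal_mono (by simp) (p.coe_le_one m)
  simpa using this

lemma summable_desc (k : ℕ) {r : ℝ} (h0 : 0 < r) (h1 : r < 1) :
    Summable (fun m : ℕ => (m.descFactorial k : ℝ) * r ^ (m - k)) := by
  have hs : Summable (fun m : ℕ => (r⁻¹) ^ k * ((m:ℝ) ^ k * r ^ m)) :=
    (summable_pow_mul_geometric_of_norm_lt_one (R := ℝ) k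
      (by rwa [Real.norm_eq_abs, abs_of_pos h0])).mul_left _
  apply hs.of_nonneg_of_le
  · intro m; positivity
  · intro m
    rcases lt_or_ge m k with hm | hm
    · rw [Nat.descFactorial_eq_zero_iff_lt.2 hm]
      push_cast
      rw [zero_mul]
      positivity
    · have h2 : r ^ (m - k) = r⁻¹ ^ k * r ^ m := by
        rw [pow_sub₀ r (ne_of_gt h0) hm, ← inv_pow]; ring
      rw [h2]
      have h3 : ((m.descFactorial k : ℕ) : ℝ) ≤ (m : ℝ) ^ k := by
        exact_mod_cast Nat.descFactorial_le_pow m k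
      calc (m.descFactorial k : ℝ) * (r⁻¹ ^ k * r ^ m)
          ≤ (m:ℝ)^k * (r⁻¹ ^ k * r ^ m) := by
            apply mul_le_mul_of_nonneg_right h3; positivity
        _ = r⁻¹ ^ k * ((m:ℝ)^k * r ^ m) := by ring

lemma gser_hasDerivAt (p : PMF ℕ) (k : ℕ) {z : ℝ} (hz : |z| < 1) :
    HasDerivAt (gser p k) (gser p (k+1) z) z := by
  set r : ℝ := (|z| + 1) / 2 with hrdef
  have h0r : 0 < r := by positivity
  have hzr : |z| < r := by rw [hrdef]; linarith [abs_nonneg z]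
  have hr1 : r < 1 := by rw [hrdef]; linarith
  have hu : Summable (fun m : ℕ => (m.descFactorial (k+1) : ℝ) * r ^ (m - (k+1))) :=
    summable_desc _ h0r hr1
  have key := hasDerivAt_tsum_of_isPreconnected hu (Metric.isOpen_ball (x := (0:ℝ)) (ε := r))
    (convex_ball (0:ℝ) r).isPreconnected
    (g := fun n y => (p n).toReal * (n.descFactorial k : ℝ) * y ^ (n - k))
    (g' := fun n y => (p n).toReal * (n.descFactorial (k+1) : ℝ) * y ^ (n - (k+1)))
    (y₀ := 0) (y := z)
    ?_ ?_ ?_ ?_ ?_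
  · exact key
  · intro n y _
    have h := (hasDerivAt_pow (n - k) y).const_mul ((p n).toReal * (n.descFactorial k : ℝ))
    have e : (p n).toReal * (n.descFactorial k : ℝ) * (((n - k : ℕ) : ℝ) * y ^ (n - k - 1))
        = (p n).toReal * (n.descFactorial (k+1) : ℝ) * y ^ (n - (k+1)) := by
      rw [show n - (k+1) = n - k - 1 by omega, Nat.descFactorial_succ]
      push_cast
      ring
    rw [e] at h
    exact h
  · intro n y hy
    have hyr : |y| ≤ r := le_of_lt (by simpa [Real.dist_eq] using hy)
    rw [Real.norm_eq_abs, abs_mul, abs_mul, abs_pow]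
    have h1 : |(p n).toReal| ≤ 1 := by
      rw [abs_of_nonneg ENNReal.toReal_nonneg]; exact ptoReal_le_one p n
    have h2 : |((n.descFactorial (k+1) : ℕ) : ℝ)| = (n.descFactorial (k+1) : ℝ) :=
      abs_of_nonneg (by positivity)
    rw [h2]
    calc |(p n).toReal| * (n.descFactorial (k+1) : ℝ) * |y| ^ (n - (k+1))
        ≤ 1 * (n.descFactorial (k+1) : ℝ) * r ^ (n - (k+1)) := by
          gcongr
      _ = (n.descFactorial (k+1) : ℝ) * r ^ (n - (k+1)) := by ring
  · simpa [Real.dist_eq] using h0r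
  · apply summable_of_ne_finset_zero (s := Finset.range (k+1))
    intro n hn
    rw [Finset.mem_range, not_lt] at hn
    show (p n).toReal * (n.descFactorial k : ℝ) * (0:ℝ) ^ (n - k) = 0
    rw [zero_pow (by omega : n - k ≠ 0), mul_zero]
  · simpa [Real.dist_eq] using hzr

lemma iteratedDeriv_phi (p : PMF ℕ) (k : ℕ) {z : ℝ} (hz : |z| < 1) :
    iteratedDeriv k (fun w => ∑' m : ℕ, (p m).toReal * w ^ m) z = gser p k z := by
  induction k generalizing z with
  | zero =>
      rw [iteratedDeriv_zero]
      unfold gser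
      simp
  | succ k ih =>
      rw [iteratedDeriv_succ]
      have hmem : Metric.ball (0:ℝ) 1 ∈ nhds z :=
        (Metric.isOpen_ball).mem_nhds (by simpa [Real.dist_eq] using hz)
      have hev : (iteratedDeriv k (fun w => ∑' m : ℕ, (p m).toReal * w ^ m))
          =ᶠ[nhds z] gser p k := by
        filter_upwards [hmem] with y hy
        exact ih (by simpa [Real.dist_eq] using hy)
      rw [hev.deriv_eq]
      exact (gser_hasDerivAt p k hz).deriv



lemma nat_prod_fact (a : ℕ) : ∀ k, a.factorial * ∏ j ∈ Finset.range k, (a + 1 + j) = (a + k).factorial := by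
  intro k
  induction k with
  | zero => simp
  | succ k ih =>
      rw [Finset.prod_range_succ, ← mul_assoc, ih, show a + (k+1) = (a + k) + 1 from rfl,
        Nat.factorial_succ]
      ring

lemma beta_nat (a b : ℕ) :
    ∫ x in (0:ℝ)..1, x ^ a * (1 - x) ^ b = (a.factorial * b.factorial : ℝ) / (a + b + 1).factorial := by
  have h0 : Complex.betaIntegral ((a:ℂ)+1) ((b:ℂ)+1) =
      ((∫ x in (0:ℝ)..1, x ^ a * (1 - x) ^ b : ℝ) : ℂ) := by
    rw [Complex.betaIntegral, ← intervalIntegral.integral_ofReal (f := fun x => x ^ a * (1 - x) ^ b)]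
    apply intervalIntegral.integral_congr
    intro x _
    push_cast
    rw [add_sub_cancel_right, add_sub_cancel_right, Complex.cpow_natCast, Complex.cpow_natCast]
  have h1 := Complex.betaIntegral_eval_nat_add_one_right (u := (a:ℂ)+1) (by simp; positivity) b
  rw [h0] at h1
  have h2 : ((a.factorial : ℂ)) * ∏ j ∈ Finset.range (b+1), ((a:ℂ)+1+j) = ((a+b+1).factorial : ℂ) := by
    have h := congrArg (fun t : ℕ => (t : ℂ)) (nat_prod_fact a (b+1))
    push_cast at h ⊢
    rw [h]
    norm_num
    ring_nf
  have hprod_ne : (∏ j ∈ Finset.range (b+1), ((a:ℂ)+1+j)) ≠ 0 := by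
    apply Finset.prod_ne_zero_iff.2
    intro j _
    intro h
    have h' : ((a + j + 1 : ℕ) : ℂ) = 0 := by push_cast; linear_combination h
    rw [Nat.cast_eq_zero] at h'; omega
  have hfa : ((a+b+1).factorial : ℂ) ≠ 0 := by exact_mod_cast Nat.factorial_ne_zero _
  have key : ((∫ x in (0:ℝ)..1, x ^ a * (1 - x) ^ b : ℝ) : ℂ)
      = ((a.factorial * b.factorial : ℝ) : ℂ) / (((a + b + 1).factorial : ℝ) : ℂ) := by
    rw [h1]
    field_simp
    push_cast
    rw [← h2]
    have : (a.factorial : ℂ) ≠ 0 := by exact_mod_cast Nat.factorial_ne_zero _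
    field_simp
  rw [← Complex.ofReal_div] at key
  exact_mod_cast key



lemma tsum_pi_prod : ∀ (k : ℕ) (q : ℕ → ℝ≥0∞),
    (∑' f : Fin k → ℕ, ∏ l, q (f l)) = (∑' m, q m) ^ k := by
  intro k
  induction k with
  | zero =>
      intro q
      rw [pow_zero, tsum_eq_single (fun i => i.elim0)
        (fun b hb => absurd (funext fun i => i.elim0) hb)]
      simp
  | succ k ih =>
      intro q
      rw [← Equiv.tsum_eq (Fin.consEquiv (fun _ : Fin (k+1) => ℕ))]
      have h1 : ∀ x : ℕ × (Fin k → ℕ),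
          (∏ l, q ((Fin.consEquiv (fun _ : Fin (k+1) => ℕ)) x l)) = q x.1 * ∏ l, q (x.2 l) := by
        intro x
        simp [Fin.consEquiv, Fin.prod_univ_succ]
      rw [tsum_congr h1, ENNReal.tsum_prod']
      simp_rw [ENNReal.tsum_mul_left]
      rw [ENNReal.tsum_mul_right, ih, pow_succ, mul_comm]

/-- ENNReal coefficient for the expansion. -/
noncomputable def qfun (p : PMF ℕ) (z : ℝ) (m : ℕ) : ℝ≥0∞ := p m * (ENNReal.ofReal z) ^ m

lemma qfun_ne_top (p : PMF ℕ) (z : ℝ) (m : ℕ) : qfun p z m ≠ ⊤ :=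
  ENNReal.mul_ne_top (p.apply_ne_top m) (pow_ne_top ofReal_ne_top)

lemma qfun_toReal (p : PMF ℕ) {z : ℝ} (h0 : 0 ≤ z) (m : ℕ) :
    (qfun p z m).toReal = (p m).toReal * z ^ m := by
  rw [qfun, ENNReal.toReal_mul, ENNReal.toReal_pow, ENNReal.toReal_ofReal h0]

lemma qfun_tsum_le_one (p : PMF ℕ) {z : ℝ} (h1 : z ≤ 1) : (∑' m, qfun p z m) ≤ 1 := by
  calc (∑' m, qfun p z m) ≤ ∑' m, p m := by
        apply ENNReal.tsum_le_tsum
        intro m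
        rw [qfun]
        calc p m * ENNReal.ofReal z ^ m ≤ p m * 1 := by
              apply mul_le_mul_right
              exact pow_le_one' (ENNReal.ofReal_le_one.2 h1) m
          _ = p m := mul_one _
    _ = 1 := p.tsum_coe

lemma qfun_tsum_toReal (p : PMF ℕ) {z : ℝ} (h0 : 0 ≤ z) :
    (∑' m, qfun p z m).toReal = ∑' m : ℕ, (p m).toReal * z ^ m := by
  rw [ENNReal.tsum_toReal_eq (fun m => qfun_ne_top p z m)]
  exact tsum_congr (qfun_toReal p h0)

lemma qfun_prod_eq (p : PMF ℕ) (z : ℝ) {k : ℕ} (h : Fin k → ℕ) :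
    (∏ l, qfun p z (h l)) = (∏ l, p (h l)) * (ENNReal.ofReal z) ^ (∑ l, h l) := by
  simp_rw [qfun]
  rw [Finset.prod_mul_distrib, Finset.prod_pow_eq_pow_sum]

lemma qfun_prod_toReal (p : PMF ℕ) {z : ℝ} (h0 : 0 ≤ z) {k : ℕ} (h : Fin k → ℕ) :
    (∏ l, qfun p z (h l)).toReal = (∏ l, (p (h l)).toReal) * z ^ (∑ l, h l) := by
  rw [qfun_prod_eq, ENNReal.toReal_mul, ENNReal.toReal_pow, ENNReal.toReal_ofReal h0,
    ENNReal.toReal_prod]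

lemma summable_phi_pow (p : PMF ℕ) {z : ℝ} (h0 : 0 ≤ z) (h1 : z ≤ 1) (k : ℕ) :
    Summable (fun h : Fin k → ℕ => (∏ l, (p (h l)).toReal) * z ^ (∑ l, h l)) := by
  have hne : (∑' h : Fin k → ℕ, ∏ l, qfun p z (h l)) ≠ ⊤ := by
    rw [tsum_pi_prod]
    exact ne_top_of_le_ne_top one_ne_top (pow_le_one' (qfun_tsum_le_one p h1) k)
  have := ENNReal.summable_toReal hne
  refine Summable.congr this ?_
  intro h
  exact qfun_prod_toReal p h0 h

lemma phi_pow_expand (p : PMF ℕ) {z : ℝ} (h0 : 0 ≤ z) (h1 : z ≤ 1) (k : ℕ) :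
    (∑' m : ℕ, (p m).toReal * z ^ m) ^ k
      = ∑' h : Fin k → ℕ, (∏ l, (p (h l)).toReal) * z ^ (∑ l, h l) := by
  have hA := qfun_tsum_le_one p h1
  have hAne : (∑' m, qfun p z m) ≠ ⊤ := ne_top_of_le_ne_top one_ne_top hA
  have hk : ((∑' m, qfun p z m) ^ k).toReal = ((∑' m, qfun p z m).toReal) ^ k :=
    ENNReal.toReal_pow _ _
  rw [← tsum_pi_prod k (qfun p z)] at hk
  rw [qfun_tsum_toReal p h0] at hk
  rw [← hk]
  rw [ENNReal.tsum_toReal_eq (fun h => by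
    exact ENNReal.prod_ne_top fun l _ => qfun_ne_top p z (h l))]
  exact tsum_congr fun h => qfun_prod_toReal p h0 h



lemma summable_gterm (p : PMF ℕ) (k : ℕ) {z : ℝ} (h0 : 0 < z) (h1 : z < 1) :
    Summable (fun m : ℕ => (p m).toReal * (m.descFactorial k : ℝ) * z ^ (m - k)) := by
  apply (summable_desc k h0 h1).of_nonneg_of_le (fun m => by positivity)
  intro m
  exact mul_le_mul_of_nonneg_right
    (mul_le_of_le_one_left (by positivity) (ptoReal_le_one p m)) (by positivity)

lemma summable_cprod (p : PMF ℕ) (k : ℕ) :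
    Summable (fun f : Fin k → ℕ => ∏ l, (p (f l)).toReal) := by
  have := summable_phi_pow p (z := 1) zero_le_one le_rfl k
  refine this.congr fun f => by simp

lemma phi_pow_gser (p : PMF ℕ) (n' i : ℕ) {z : ℝ} (h0 : 0 < z) (h1 : z < 1) :
    gser p i z * (∑' m : ℕ, (p m).toReal * z ^ m) ^ n'
    = ∑' f : Fin (n'+1) → ℕ,
        (∏ l, (p (f l)).toReal) * ((f 0).descFactorial i : ℝ) * z ^ ((∑ l, f l) - i) := by
  have hf := summable_gterm p i h0 h1
  have hg := summable_phi_pow p h0.le h1.le n'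
  have hfg := Summable.mul_of_nonneg hf hg (fun m => by positivity) (fun h => by positivity)
  have hmul := Summable.tsum_mul_tsum hf hg hfg
  rw [phi_pow_expand p h0.le h1.le n', gser, hmul]
  refine Eq.trans (tsum_congr ?_)
    (Equiv.tsum_eq (Fin.consEquiv (fun _ : Fin (n'+1) => ℕ))
      (fun f : Fin (n'+1) → ℕ =>
        (∏ l, (p (f l)).toReal) * ((f 0).descFactorial i : ℝ) * z ^ ((∑ l, f l) - i)))
  rintro ⟨m, h⟩
  have e0 : (Fin.consEquiv (fun _ : Fin (n'+1) => ℕ)) (m, h) 0 = m := rfl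
  have eprod : (∏ l, (p ((Fin.consEquiv (fun _ : Fin (n'+1) => ℕ)) (m, h) l)).toReal)
      = (p m).toReal * ∏ l, (p (h l)).toReal := by
    simp [Fin.consEquiv, Fin.prod_univ_succ]
  have esum : (∑ l, (Fin.consEquiv (fun _ : Fin (n'+1) => ℕ)) (m, h) l) = m + ∑ l, h l := by
    simp [Fin.consEquiv, Fin.sum_univ_succ]
  rw [e0, eprod, esum]
  rcases le_or_gt i m with him | him
  · rw [show m + (∑ l, h l) - i = (m - i) + ∑ l, h l by omega, pow_add]
    ring
  · rw [Nat.descFactorial_eq_zero_iff_lt.2 him]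
    push_cast
    ring

noncomputable def Ffun (p : PMF ℕ) (i n' : ℕ) (f : Fin (n'+1) → ℕ) (z : ℝ) : ℝ :=
  ((∏ l, (p (f l)).toReal) * ((f 0).descFactorial i : ℝ) * z ^ ((∑ l, f l) - i))
    * (1 - z) ^ (i - 1)

lemma Ffun_cont (p : PMF ℕ) (i n' : ℕ) (f : Fin (n'+1) → ℕ) : Continuous (Ffun p i n' f) := by
  unfold Ffun
  fun_prop

lemma Ffun_integrableOn (p : PMF ℕ) (i n' : ℕ) (f : Fin (n'+1) → ℕ) :
    IntegrableOn (Ffun p i n' f) (Set.Ioo (0:ℝ) 1) := by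
  exact ((Ffun_cont p i n' f).integrableOn_Icc (a := 0) (b := 1)).mono_set Set.Ioo_subset_Icc_self

lemma Ffun_integral (p : PMF ℕ) (i n' : ℕ) (f : Fin (n'+1) → ℕ) :
    ∫ z in Set.Ioo (0:ℝ) 1, Ffun p i n' f z
      = (∏ l, (p (f l)).toReal) * ((f 0).descFactorial i : ℝ) *
        ((((∑ l, f l) - i).factorial * (i-1).factorial : ℝ) /
          (((∑ l, f l) - i) + (i-1) + 1).factorial) := by
  rw [← integral_Ioc_eq_integral_Ioo, ← intervalIntegral.integral_of_le zero_le_one]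
  have h : ∀ z : ℝ, Ffun p i n' f z
      = ((∏ l, (p (f l)).toReal) * ((f 0).descFactorial i : ℝ))
        * (z ^ ((∑ l, f l) - i) * (1 - z) ^ (i - 1)) := fun z => by unfold Ffun; ring
  simp_rw [h]
  rw [intervalIntegral.integral_const_mul, beta_nat]

lemma f0_le_sum {n' : ℕ} (f : Fin (n'+1) → ℕ) : f 0 ≤ ∑ l, f l :=
  Finset.single_le_sum (fun l _ => Nat.zero_le (f l)) (Finset.mem_univ 0)

lemma Ffun_integral_bound (p : PMF ℕ) {i : ℕ} (hi : 1 ≤ i) (n' : ℕ) (f : Fin (n'+1) → ℕ) :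
    ∫ z in Set.Ioo (0:ℝ) 1, Ffun p i n' f z
      ≤ ((i-1).factorial : ℝ) * ∏ l, (p (f l)).toReal := by
  rw [Ffun_integral]
  set c := ∏ l, (p (f l)).toReal with hc
  have hc0 : 0 ≤ c := Finset.prod_nonneg (fun l _ => ENNReal.toReal_nonneg)
  rcases le_or_gt i (f 0) with him | him
  · have hiS : i ≤ ∑ l, f l := le_trans him (f0_le_sum f)
    rw [show ((∑ l, f l) - i) + (i-1) + 1 = ∑ l, f l by omega]
    have h1 : ((f 0).descFactorial i : ℝ) * ((∑ l, f l) - i).factorial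
        ≤ ((∑ l, f l).factorial : ℝ) := by
      have := Nat.factorial_mul_descFactorial hiS
      have h2 : (f 0).descFactorial i * ((∑ l, f l) - i).factorial
          ≤ ((∑ l, f l).factorial) := by
        calc (f 0).descFactorial i * ((∑ l, f l) - i).factorial
            ≤ ((∑ l, f l).descFactorial i) * ((∑ l, f l) - i).factorial :=
              Nat.mul_le_mul_right _ (Nat.descFactorial_le i (f0_le_sum f))
          _ = (∑ l, f l).factorial := by rw [mul_comm]; exact this
      exact_mod_cast h2
    calc c * ((f 0).descFactorial i : ℝ) *
          ((((∑ l, f l) - i).factorial * (i-1).factorial : ℝ) / ((∑ l, f l).factorial : ℝ))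
        = (c * ((i-1).factorial : ℝ)) *
          ((((f 0).descFactorial i : ℝ) * (((∑ l, f l) - i).factorial : ℝ)) /
            ((∑ l, f l).factorial : ℝ)) := by ring
      _ ≤ (c * ((i-1).factorial : ℝ)) * 1 := by
          apply mul_le_mul_of_nonneg_left _ (by positivity)
          rw [div_le_one (by positivity)]
          exact h1
      _ = ((i-1).factorial : ℝ) * c := by ring
  · rw [Nat.descFactorial_eq_zero_iff_lt.2 him]
    push_cast
    rw [mul_zero, zero_mul]
    positivity

lemma Ffun_nonneg (p : PMF ℕ) (i n' : ℕ) (f : Fin (n'+1) → ℕ) {z : ℝ} (hz : z ∈ Set.Ioo (0:ℝ) 1) :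
    0 ≤ Ffun p i n' f z := by
  unfold Ffun
  have h0 : (0:ℝ) ≤ z := hz.1.le
  have h1 : (0:ℝ) ≤ 1 - z := by linarith [hz.2]
  have hc : (0:ℝ) ≤ ∏ l, (p (f l)).toReal := Finset.prod_nonneg (fun l _ => ENNReal.toReal_nonneg)
  positivity

/-- For `M₁,...,Mₙ` i.i.d. with common pgf `φ` and `i ≥ 1`,
`E[(M₁)_i / (Σ M_l)_i] = (1/Γ(i)) ∫₀¹ (1-z)^(i-1) φ(z)^(n-1) φ^(i)(z) dz`,
the ratio being `0` when the denominator falling factorial vanishes. -/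
theorem stmt_1 (p : PMF ℕ) (n i : ℕ) (hn : 1 ≤ n) (hi : 1 ≤ i) :
    (∑' f : Fin n → ℕ, (∏ l, (p (f l)).toReal) *
        (((f ⟨0, hn⟩).descFactorial i : ℝ) / ((∑ l, f l).descFactorial i : ℝ)))
      = (1 / (Nat.factorial (i - 1) : ℝ)) *
        ∫ z in (0:ℝ)..1, (1 - z) ^ (i - 1) *
          ((fun w => ∑' m : ℕ, (p m).toReal * w ^ m) z) ^ (n - 1) *
          iteratedDeriv i (fun w => ∑' m : ℕ, (p m).toReal * w ^ m) z := by
  obtain ⟨n', rfl⟩ : ∃ n', n = n' + 1 := ⟨n - 1, by omega⟩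
  have hidx : (⟨0, hn⟩ : Fin (n'+1)) = 0 := rfl
  have hEq : Set.EqOn
      (fun z => (1 - z) ^ (i - 1) *
        ((fun w => ∑' m : ℕ, (p m).toReal * w ^ m) z) ^ (n' + 1 - 1) *
        iteratedDeriv i (fun w => ∑' m : ℕ, (p m).toReal * w ^ m) z)
      (fun z => ∑' f : Fin (n'+1) → ℕ, Ffun p i n' f z)
      (Set.Ioo (0:ℝ) 1) := by
    intro z hz
    obtain ⟨hz0, hz1⟩ := hz
    have habs : |z| < 1 := by rw [abs_of_pos hz0]; exact hz1
    have h2 := phi_pow_gser p n' i hz0 hz1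
    have h3 : (∑' f : Fin (n'+1) → ℕ,
        ((∏ l, (p (f l)).toReal) * ((f 0).descFactorial i : ℝ) * z ^ ((∑ l, f l) - i))
          * (1-z)^(i-1))
        = (∑' f : Fin (n'+1) → ℕ,
            (∏ l, (p (f l)).toReal) * ((f 0).descFactorial i : ℝ) * z ^ ((∑ l, f l) - i))
          * (1-z)^(i-1) := tsum_mul_right
    simp only [Ffun]
    rw [h3, ← h2, iteratedDeriv_phi p i habs, show n' + 1 - 1 = n' from rfl]
    ring
  have hsum_norm : Summable (fun f : Fin (n'+1) → ℕ =>
      ∫ z in Set.Ioo (0:ℝ) 1, ‖Ffun p i n' f z‖) := by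
    have heq : ∀ f : Fin (n'+1) → ℕ, ∫ z in Set.Ioo (0:ℝ) 1, ‖Ffun p i n' f z‖
        = ∫ z in Set.Ioo (0:ℝ) 1, Ffun p i n' f z := by
      intro f
      apply setIntegral_congr_fun measurableSet_Ioo
      intro z hz
      exact Real.norm_of_nonneg (Ffun_nonneg p i n' f hz)
    apply Summable.of_nonneg_of_le
      (fun f => integral_nonneg (fun z => norm_nonneg _))
      (fun f => by rw [heq f]; exact Ffun_integral_bound p hi n' f)
      ((summable_cprod p (n'+1)).mul_left ((i-1).factorial : ℝ))
  have hswap := integral_tsum_of_summable_integral_norm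
    (μ := volume.restrict (Set.Ioo (0:ℝ) 1))
    (F := fun f : Fin (n'+1) → ℕ => Ffun p i n' f)
    (fun f => Ffun_integrableOn p i n' f) hsum_norm
  rw [hidx, intervalIntegral.integral_of_le zero_le_one, integral_Ioc_eq_integral_Ioo,
    setIntegral_congr_fun measurableSet_Ioo hEq, ← hswap, ← tsum_mul_left]
  apply tsum_congr
  intro f
  rw [Ffun_integral]
  set c := ∏ l, (p (f l)).toReal with hc
  rcases le_or_gt i (f 0) with him | him
  · have hiS : i ≤ ∑ l, f l := le_trans him (f0_le_sum f)
    rw [show ((∑ l, f l) - i) + (i-1) + 1 = ∑ l, f l by omega]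
    have hfact : (((∑ l, f l) - i).factorial : ℝ) * ((∑ l, f l).descFactorial i : ℝ)
        = ((∑ l, f l).factorial : ℝ) := by
      exact_mod_cast Nat.factorial_mul_descFactorial hiS
    have hDS : ((∑ l, f l).descFactorial i : ℝ) ≠ 0 := by
      have h4 : (∑ l, f l).descFactorial i ≠ 0 := by
        rw [Ne, Nat.descFactorial_eq_zero_iff_lt]; omega
      exact_mod_cast h4
    have hSf : ((∑ l, f l).factorial : ℝ) ≠ 0 := by
      exact_mod_cast (∑ l, f l).factorial_ne_zero
    have hif : ((i-1).factorial : ℝ) ≠ 0 := by exact_mod_cast (i-1).factorial_ne_zero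
    field_simp
    linear_combination (-(c * ((f 0).descFactorial i : ℝ))) * hfact
  · rw [Nat.descFactorial_eq_zero_iff_lt.2 him]
    push_cast
    simp
end

section
/- For the geometric BGW process with offspring pgf φ(z) = q/(1−pz), mean μ = p/q ≠ 1, one founder: P(τ_{N_t(1),1}^{(t)}(1) ≥ k | N_t(1) > 0) = (μ^{t+1} − μ^k)/(μ^k(μ^{t+1} − 1)) for 0 ≤ k ≤ t−1, where τ_{N_t(1),1}^{(t)}(1) is the coalescence time of the whole generation-t population. -/
/-- geometric BGW, `φ(z)=q/(1-pz)`, `μ = p/q ≠ 1`, one founder.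
By the general theorem,
`P(τ_{N_t(1),1}^{(t)}(1) ≥ k | N_t(1) > 0)
  = [P(N_{t-k}>0)/P(N_t>0)] · φ_k'(P(N_{t-k}=0))` with `P(N_s=0)=φ_s(0)`;
this equals `(μ^{t+1}-μ^k)/(μ^k(μ^{t+1}-1))` for `0 ≤ k ≤ t-1`. -/
theorem stmt_11 (p q μ : ℝ) (hp : p ∈ Set.Ioo (0:ℝ) 1) (hq : q = 1 - p)
    (hμ : μ = p / q) (hμ1 : μ ≠ 1) (t k : ℕ) (ht : 1 ≤ t) (hk : k ≤ t - 1) :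
    ((1 - (fun w => q / (1 - p * w))^[t - k] 0) /
        (1 - (fun w => q / (1 - p * w))^[t] 0)) *
      deriv ((fun w => q / (1 - p * w))^[k]) ((fun w => q / (1 - p * w))^[t - k] 0)
      = (μ ^ (t + 1) - μ ^ k) / (μ ^ k * (μ ^ (t + 1) - 1)) := by
  obtain ⟨hp0, hp1⟩ := hp
  have hq0 : 0 < q := by rw [hq]; linarith
  have hμ0 : 0 < μ := by rw [hμ]; positivity
  have h1μ : (1:ℝ) + μ ≠ 0 := by positivity
  have h1μeq : 1 + μ = 1 / q := by
    rw [hμ]; field_simp [hq0.ne']; linarith [hq]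
  have hq' : q = 1 / (1 + μ) := by
    rw [h1μeq, one_div_one_div]
  have hp' : p = μ / (1 + μ) := by
    rw [h1μeq, hμ]; field_simp
  set φ : ℝ → ℝ := fun w => q / (1 - p * w) with hφ
  set x : ℕ → ℝ := fun n => (μ ^ n - 1) / (μ ^ (n + 1) - 1) with hxdef
  have hE : ∀ m : ℕ, μ ^ (m + 1) - 1 ≠ 0 := by
    intro m h
    have h1 : μ ^ (m + 1) = 1 := by linarith
    rcases lt_trichotomy μ 1 with hlt | heq | hgt
    · have : μ ^ (m + 1) < 1 := pow_lt_one₀ hμ0.le hlt (Nat.succ_ne_zero m)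
      linarith
    · exact hμ1 heq
    · have : 1 < μ ^ (m + 1) := one_lt_pow₀ hgt (Nat.succ_ne_zero m)
      linarith
  have hE' : ∀ m : ℕ, μ ^ (m + 2) - 1 ≠ 0 := fun m => hE (m + 1)
  have key : ∀ n : ℕ, 1 - p * x n = (μ ^ (n + 2) - 1) / ((1 + μ) * (μ ^ (n + 1) - 1)) := by
    intro n
    show 1 - p * ((μ ^ n - 1) / (μ ^ (n + 1) - 1))
        = (μ ^ (n + 2) - 1) / ((1 + μ) * (μ ^ (n + 1) - 1))
    rw [hp', eq_div_iff (mul_ne_zero h1μ (hE n))]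
    field_simp [hE n, h1μ]
    ring
  have hne : ∀ n : ℕ, 1 - p * x n ≠ 0 := by
    intro n
    rw [key n]
    exact div_ne_zero (hE' n) (mul_ne_zero h1μ (hE n))
  have hstep : ∀ n : ℕ, φ (x n) = x (n + 1) := by
    intro n
    show q / (1 - p * x n) = (μ ^ (n + 1) - 1) / (μ ^ (n + 1 + 1) - 1)
    rw [key n, hq', div_eq_div_iff (div_ne_zero (hE' n) (mul_ne_zero h1μ (hE n))) (hE (n + 1))]
    field_simp [hE n, hE' n, h1μ]
  have hx : ∀ n : ℕ, φ^[n] 0 = x n := by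
    intro n
    induction n with
    | zero => show (0:ℝ) = (μ ^ 0 - 1) / (μ ^ (0 + 1) - 1); simp
    | succ n ih =>
      rw [Function.iterate_succ_apply', ih, hstep]
  have hder : ∀ n : ℕ,
      HasDerivAt φ (μ * (μ ^ (n + 1) - 1) ^ 2 / (μ ^ (n + 2) - 1) ^ 2) (x n) := by
    intro n
    have hd : HasDerivAt (fun w => 1 - p * w) (-p) (x n) := by
      simpa using ((hasDerivAt_id (x n)).const_mul p).const_sub 1
    have h0 : HasDerivAt φ
        ((0 * (1 - p * x n) - q * (-p)) / (1 - p * x n) ^ 2) (x n) :=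
      (hasDerivAt_const (x n) q).div hd (hne n)
    convert h0 using 1
    rw [key n, hp', hq']
    field_simp [hE n, hE' n, h1μ]
    ring
  have hiter : ∀ (j n : ℕ),
      HasDerivAt (φ^[j])
        (μ ^ j * (μ ^ (n + 1) - 1) ^ 2 / (μ ^ (n + j + 1) - 1) ^ 2) (x n) := by
    intro j
    induction j with
    | zero =>
      intro n
      have h1 : μ ^ 0 * (μ ^ (n + 1) - 1) ^ 2 / (μ ^ (n + 0 + 1) - 1) ^ 2 = 1 := by
        rw [pow_zero, one_mul]
        exact div_self (pow_ne_zero 2 (hE n))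
      rw [h1]
      simpa using hasDerivAt_id (x n)
    | succ j ih =>
      intro n
      have h1 : HasDerivAt (φ^[j])
          (μ ^ j * (μ ^ (n + 2) - 1) ^ 2 / (μ ^ (n + 1 + j + 1) - 1) ^ 2) (φ (x n)) := by
        rw [hstep n]
        simpa using ih (n + 1)
      have h2 := hder n
      have h3 := HasDerivAt.comp (x n) h1 h2
      rw [← Function.iterate_succ] at h3
      have hex : n + 1 + j + 1 = n + (j + 1) + 1 := by omega
      rw [hex] at h3
      refine HasDerivAt.congr_deriv h3 ?_
      field_simp [hE n, hE' n, hE (n + (j + 1))]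
      ring
  have hkt : k < t := lt_of_le_of_lt hk (Nat.sub_lt ht one_pos)
  obtain ⟨m, rfl⟩ : ∃ m, t = m + k := ⟨t - k, (Nat.sub_add_cancel hkt.le).symm⟩
  have hmk : m + k - k = m := by omega
  rw [hmk, hx m, hx (m + k), (hiter k m).deriv]
  have hone : ∀ n : ℕ, 1 - x n = μ ^ n * (μ - 1) / (μ ^ (n + 1) - 1) := by
    intro n
    show 1 - (μ ^ n - 1) / (μ ^ (n + 1) - 1) = μ ^ n * (μ - 1) / (μ ^ (n + 1) - 1)
    rw [eq_div_iff (hE n)]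
    field_simp [hE n]
    ring
  rw [hone m, hone (m + k)]
  have hμne : μ ≠ 0 := ne_of_gt hμ0
  have hμ1' : μ - 1 ≠ 0 := sub_ne_zero.mpr hμ1
  field_simp [hμne, hμ1', hE m, hE (m + k)]
  ring
end

section
/- For the critical geometric BGW process (μ = 1, φ(z) = (1/2)/(1 − z/2)) with one founder: P(τ_{i,1}^{(t)}(1) ≥ k | N_t(1) = i) = [(t−k)(t+1)/(t(t−k+1))]^{i−1} for 0 ≤ k ≤ t−1 and i ≥ 1. -/
open Filter Topology

noncomputable def phiFun : ℝ → ℝ := fun w => (1/2 : ℝ) / (1 - w / 2)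

lemma iterFormula (s : ℕ) : ∀ z : ℝ, z ≤ 1 →
    (fun w => (1/2 : ℝ) / (1 - w / 2))^[s] z
      = ((s:ℝ) - ((s:ℝ)-1)*z)/(((s:ℝ)+1) - (s:ℝ)*z) := by
  induction s with
  | zero => intro z hz; simp
  | succ n ih =>
    intro z hz
    rw [Function.iterate_succ_apply]
    have h2 : (2:ℝ) - z ≥ 1 := by linarith
    have h2' : (2:ℝ) - z ≠ 0 := by linarith
    have hφ : (1/2 : ℝ) / (1 - z / 2) = 1/(2 - z) := by
      rw [div_eq_div_iff (by linarith) (by linarith)]; ring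
    have h1 : 1/(2-z) ≤ 1 := by
      rw [div_le_one (by linarith)]; linarith
    simp only [hφ]
    rw [ih _ h1]
    have hd : ((n:ℝ)+1) - (n:ℝ) * (1/(2-z)) = ((n:ℝ) + 2 - ((n:ℝ)+1)*z)/(2-z) := by
      field_simp; ring
    have hdpos : (n:ℝ) + 2 - ((n:ℝ)+1)*z > 0 := by nlinarith [Nat.cast_nonneg (α := ℝ) n]
    push_cast
    rw [div_eq_div_iff]
    · field_simp; ring
    · rw [hd]
      positivity
    · linarith

lemma seq_mem : ∀ j : ℕ, (1:ℝ)/(j+2) ∈ Set.Ioc (0:ℝ) 1 := by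
  intro j
  constructor
  · positivity
  · rw [div_le_one (by positivity)]
    have : (0:ℝ) ≤ j := Nat.cast_nonneg j
    linarith

lemma seq_tendsto : Tendsto (fun j : ℕ => (1:ℝ)/(j+2)) atTop (𝓝 0) := by
  simp only [one_div]
  apply Tendsto.comp tendsto_inv_atTop_zero
  exact tendsto_atTop_add_const_right atTop 2 tendsto_natCast_atTop_atTop

lemma tail_tendsto (c : ℕ → ℝ) (hc : ∀ n, 0 ≤ c n) (hcs : Summable c) :
    Tendsto (fun j : ℕ => ∑' m, c m * ((1:ℝ)/(j+2))^m) atTop (𝓝 (c 0)) := by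
  have key : Tendsto (fun j : ℕ => ∑' m, c m * ((1:ℝ)/(j+2))^m) atTop
      (𝓝 (∑' m, c m * (0:ℝ)^m)) := by
    apply tendsto_tsum_of_dominated_convergence hcs
    · intro m
      exact Tendsto.const_mul _ (seq_tendsto.pow m)
    · filter_upwards with j m
      have h := seq_mem j
      rw [Real.norm_eq_abs, abs_of_nonneg (mul_nonneg (hc m) (by positivity))]
      calc c m * ((1:ℝ)/(j+2))^m ≤ c m * 1 := by
            apply mul_le_mul_of_nonneg_left _ (hc m)
            exact pow_le_one₀ (le_of_lt h.1) h.2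
        _ = c m := mul_one _
  convert key using 2
  rw [tsum_eq_single 0 (fun m hm => by simp [zero_pow hm])]
  simp

lemma coeff_unique (b a : ℕ → ℝ) (hb : ∀ n, 0 ≤ b n) (ha : ∀ n, 0 ≤ a n)
    (hbs : Summable b) (has : Summable a)
    (h : ∀ z ∈ Set.Ioc (0:ℝ) 1, ∑' n, b n * z^n = ∑' n, a n * z^n) :
    ∀ n, b n = a n := by
  have tail : ∀ n, ∀ z ∈ Set.Ioc (0:ℝ) 1,
      ∑' m, b (n+m) * z^m = ∑' m, a (n+m) * z^m := by
    intro n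
    induction n with
    | zero => intro z hz; simpa using h z hz
    | succ n ih =>
      -- summability of shifted series
      have hbs' : Summable (fun m => b (n+m)) := by
        have := (summable_nat_add_iff n).mpr hbs
        exact this.congr (fun m => by rw [add_comm])
      have has' : Summable (fun m => a (n+m)) := by
        have := (summable_nat_add_iff n).mpr has
        exact this.congr (fun m => by rw [add_comm])
      have hbn : b n = a n := by
        have hlim1 := tail_tendsto (fun m => b (n+m)) (fun m => hb _) hbs'
        have hlim2 := tail_tendsto (fun m => a (n+m)) (fun m => ha _) has'
        have heq : (fun j : ℕ => ∑' m, b (n+m) * ((1:ℝ)/(j+2))^m)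
            = (fun j : ℕ => ∑' m, a (n+m) * ((1:ℝ)/(j+2))^m) := by
          funext j; exact ih _ (seq_mem j)
        rw [heq] at hlim1
        simpa using tendsto_nhds_unique hlim1 hlim2
      intro z hz
      obtain ⟨hz0, hz1⟩ := hz
      have hzsum : ∀ (c : ℕ → ℝ), (∀ m, 0 ≤ c m) → Summable c → ∀ p : ℕ,
          Summable (fun m => c (p+m) * z^m) := by
        intro c hc hcs p
        have hcs' : Summable (fun m => c (p+m)) := by
          have := (summable_nat_add_iff p).mpr hcs
          exact this.congr (fun m => by rw [add_comm])
        apply Summable.of_nonneg_of_le (fun m => mul_nonneg (hc _) (pow_nonneg hz0.le m)) _ hcs'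
        intro m
        calc c (p+m) * z^m ≤ c (p+m) * 1 :=
              mul_le_mul_of_nonneg_left (pow_le_one₀ hz0.le hz1) (hc _)
          _ = c (p+m) := mul_one _
      have split : ∀ (c : ℕ → ℝ), (∀ m, 0 ≤ c m) → Summable c →
          ∑' m, c (n+m) * z^m = c n + z * ∑' m, c (n+1+m) * z^m := by
        intro c hc hcs
        rw [Summable.tsum_eq_zero_add (hzsum c hc hcs n)]
        simp only [add_zero, pow_zero, mul_one]
        congr 1
        rw [← tsum_mul_left]
        congr 1
        funext m
        rw [pow_succ]
        ring_nf
      have h1 := ih z ⟨hz0, hz1⟩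
      rw [split b hb hbs, split a ha has, hbn] at h1
      have := add_left_cancel h1
      exact mul_left_cancel₀ (ne_of_gt hz0) this
  intro n
  have hlim1 := tail_tendsto (fun m => b (n+m)) (fun m => hb _)
    (((summable_nat_add_iff n).mpr hbs).congr (fun m => by rw [add_comm]))
  have hlim2 := tail_tendsto (fun m => a (n+m)) (fun m => ha _)
    (((summable_nat_add_iff n).mpr has).congr (fun m => by rw [add_comm]))
  have heq : (fun j : ℕ => ∑' m, b (n+m) * ((1:ℝ)/(j+2))^m)
      = (fun j : ℕ => ∑' m, a (n+m) * ((1:ℝ)/(j+2))^m) := by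
    funext j; exact tail n _ (seq_mem j)
  rw [heq] at hlim1
  simpa using tendsto_nhds_unique hlim1 hlim2

noncomputable def aCoef (s : ℕ) : ℕ → ℝ :=
  fun n => if n = 0 then (s:ℝ)/((s:ℝ)+1) else (s:ℝ)^(n-1)/((s:ℝ)+1)^(n+1)

lemma aSum (s : ℕ) (z : ℝ) (hz : z ∈ Set.Icc (0:ℝ) 1) :
    HasSum (fun n => aCoef s n * z^n)
      (((s:ℝ) - ((s:ℝ)-1)*z)/(((s:ℝ)+1) - (s:ℝ)*z)) := by
  obtain ⟨hz0, hz1⟩ := hz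
  set S : ℝ := (s:ℝ) with hS
  have hS0 : 0 ≤ S := Nat.cast_nonneg s
  have hS1 : (0:ℝ) < S + 1 := by linarith
  have hr0 : 0 ≤ S*z/(S+1) := by positivity
  have hr1 : S*z/(S+1) < 1 := by
    rw [div_lt_one hS1]
    nlinarith
  have hden : (1:ℝ) ≤ (S+1) - S*z := by nlinarith
  have hgeo := hasSum_geometric_of_lt_one hr0 hr1
  have hmul := hgeo.mul_left (z/(S+1)^2)
  have hshift : (fun n : ℕ => aCoef s (n+1) * z^(n+1))
      = fun n : ℕ => z/(S+1)^2 * (S*z/(S+1))^n := by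
    funext n
    simp only [aCoef, Nat.add_sub_cancel, if_neg (Nat.succ_ne_zero n)]
    rw [div_pow, mul_pow, pow_succ]
    field_simp
    ring
  rw [← hshift] at hmul
  have := (hasSum_nat_add_iff (f := fun n => aCoef s n * z^n) 1).mp hmul
  convert this using 1
  · rfl
  simp only [aCoef, Finset.range_one, Finset.sum_singleton, if_pos rfl, ↓reduceIte, pow_zero, mul_one, ← hS]
  have h1r : (1:ℝ) - S*z/(S+1) = ((S+1) - S*z)/(S+1) := by field_simp
  rw [h1r]
  rw [inv_div]
  field_simp
  ring
lemma pmf_eq (ν : ℕ → PMF ℕ)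
    (hν : ∀ s : ℕ, ∀ z ∈ Set.Icc (0:ℝ) 1,
      (∑' n : ℕ, (ν s n).toReal * z ^ n) = (fun w => (1/2 : ℝ) / (1 - w / 2))^[s] z)
    (s : ℕ) : ∀ n, ((ν s) n).toReal = aCoef s n := by
  apply coeff_unique
  · intro n; exact ENNReal.toReal_nonneg
  · intro n
    unfold aCoef
    split <;> positivity
  · apply ENNReal.summable_toReal
    rw [(ν s).tsum_coe]
    exact ENNReal.one_ne_top
  · have := (aSum s 1 ⟨zero_le_one, le_refl 1⟩).summable
    exact this.congr (fun n => by rw [one_pow, mul_one])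
  · intro z hz
    have hz' : z ∈ Set.Icc (0:ℝ) 1 := ⟨hz.1.le, hz.2⟩
    rw [hν s z hz', iterFormula s z hz.2, (aSum s z hz').tsum_eq]

/-- critical geometric BGW (`φ(z) = (1/2)/(1-z/2)`), one founder,
laws `ν s` of `N_s(1)` with pgf `φ_s`.  Then for `0 ≤ k ≤ t-1`, `i ≥ 1`,
`P(τ_{i,1}^{(t)}(1) ≥ k | N_t(1)=i)
  = φ_k'(P(N_{t-k}=0)) · P(N_{t-k}=i)/P(N_t=i)
  = [(t-k)(t+1)/(t(t-k+1))]^{i-1}`. -/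
theorem stmt_12 (t k i : ℕ) (ht : 1 ≤ t) (hk : k ≤ t - 1) (hi : 1 ≤ i)
    (ν : ℕ → PMF ℕ)
    (hν : ∀ s : ℕ, ∀ z ∈ Set.Icc (0:ℝ) 1,
      (∑' n : ℕ, (ν s n).toReal * z ^ n) = (fun w => (1/2 : ℝ) / (1 - w / 2))^[s] z) :
    deriv ((fun w => (1/2 : ℝ) / (1 - w / 2))^[k]) ((ν (t - k) 0).toReal) *
        (ν (t - k) i).toReal / (ν t i).toReal
      = (((t : ℝ) - (k : ℝ)) * ((t : ℝ) + 1) /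
          ((t : ℝ) * ((t : ℝ) - (k : ℝ) + 1))) ^ (i - 1) := by
  have hpe := pmf_eq ν hν
  set m : ℕ := t - k with hmdef
  have hm1 : 1 ≤ m := by omega
  have hkm : k + m = t := by omega
  set K : ℝ := (k:ℝ) with hK
  set M : ℝ := (m:ℝ) with hM
  set T : ℝ := (t:ℝ) with hT
  have hTKM : T = K + M := by rw [hT, hK, hM, ← hkm]; push_cast; ring
  have hM1 : (1:ℝ) ≤ M := by rw [hM]; exact_mod_cast hm1
  have hT1 : (1:ℝ) ≤ T := by rw [hT]; exact_mod_cast ht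
  have hTK : T - K = M := by rw [hTKM]; ring
  have hx0 : (ν m 0).toReal = M/(M+1) := by
    rw [hpe m 0]; simp [aCoef]; rfl
  set x : ℝ := M/(M+1) with hxdef
  have hMpos : (0:ℝ) < M + 1 := by linarith
  have hx1 : x < 1 := by
    rw [hxdef, div_lt_one hMpos]; linarith
  -- derivative computation
  have hveq : (K+1) - K*x = (T+1)/(M+1) := by
    rw [hxdef, hTKM]
    field_simp
    ring
  have hvpos : (0:ℝ) < (K+1) - K*x := by
    rw [hveq]; positivity
  have hg : HasDerivAt (fun z : ℝ => (K - (K-1)*z)/((K+1) - K*z))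
      (((-((K-1)*1)) * ((K+1) - K*x) - (K - (K-1)*x) * (0 - K*1)) / ((K+1) - K*x)^2) x := by
    have hu : HasDerivAt (fun z : ℝ => K - (K-1)*z) (-((K-1)*1)) x :=
      ((hasDerivAt_id x).const_mul (K-1)).const_sub K
    have hv : HasDerivAt (fun z : ℝ => (K+1) - K*z) (0 - K*1) x := by
      have := ((hasDerivAt_id x).const_mul K).const_sub (K+1)
      convert this using 1
      · rfl
      · rfl
      · rfl
      ring
    exact hu.div hv (ne_of_gt hvpos)
  have hEE : (fun w => (1/2 : ℝ) / (1 - w / 2))^[k]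
      =ᶠ[𝓝 x] (fun z : ℝ => (K - (K-1)*z)/((K+1) - K*z)) := by
    filter_upwards [Iio_mem_nhds hx1] with z hz
    exact iterFormula k z (le_of_lt hz)
  have hderiv : deriv ((fun w => (1/2 : ℝ) / (1 - w / 2))^[k]) x
      = (M+1)^2/(T+1)^2 := by
    rw [hEE.deriv_eq, hg.deriv]
    have hnum : (-((K-1)*1)) * ((K+1) - K*x) - (K - (K-1)*x) * (0 - K*1) = 1 := by ring
    rw [hnum, hveq, div_pow, one_div, inv_div]
  -- values
  obtain ⟨j, rfl⟩ : ∃ j, i = j + 1 := ⟨i - 1, by omega⟩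
  have hvm : (ν m (j+1)).toReal = M^j/(M+1)^(j+2) := by
    rw [hpe m (j+1)]
    simp only [aCoef, if_neg (Nat.succ_ne_zero j), Nat.add_sub_cancel]
    rfl
  have hvt : (ν t (j+1)).toReal = T^j/(T+1)^(j+2) := by
    rw [hpe t (j+1)]
    simp only [aCoef, if_neg (Nat.succ_ne_zero j), Nat.add_sub_cancel]
    rfl
  rw [hx0, hvm, hvt, hderiv, hTK, Nat.add_sub_cancel]
  have hMpos' : (0:ℝ) < M := by linarith
  have hTpos : (0:ℝ) < T := by linarith
  have hT1pos : (0:ℝ) < T + 1 := by linarith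
  rw [div_pow, mul_pow, mul_pow]
  field_simp
  ring
end

section
/- For the Sibuya BGW process with φ(z) = 1 − λ(1−z)^α, α ∈ (0,1), λ ∈ (0,1], and n₀ ≥ 1 founders, the tail of the TMRCA of a random pair satisfies P(∞ > τ₂,₁^(t)(n₀) ≥ k) = (1 − α^{t−k})·(1 − (1−λ_t)^{n₀}) for 0 ≤ k ≤ t−1, where λ_t = λ^{(1−α^t)/(1−α)}. Hence P(τ₂,₁^(t)(n₀) < ∞) = (1 − (1−λ_t)^{n₀})(1 − α^t) and P(τ₂,₁^(t)(n₀) = k | τ < ∞) = α^{t−k−1}(1−α)/(1−α^t). -/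
open Set MeasureTheory Filter

/-- Sibuya BGW, `φ(z) = 1-λ(1-z)^α`, `n₀` founders.  With
`λ_t = λ^{(1-α^t)/(1-α)}` and the integral representation
`T k = n₀ ∫₀¹ (1-z)(φ_{t-k}''/φ_{t-k}') φ_t' φ_t^{n₀-1} dz` of
`P(∞ > τ₂,₁^{(t)}(n₀) ≥ k)`, one has
`T k = (1-α^{t-k})(1-(1-λ_t)^{n₀})` for `0 ≤ k ≤ t-1`, hence
`P(τ < ∞) = T 0 = (1-(1-λ_t)^{n₀})(1-α^t)` and
`P(τ = k | τ < ∞) = (T k - T (k+1))/T 0 = α^{t-k-1}(1-α)/(1-α^t)`. -/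
theorem stmt_16 (α lam : ℝ) (hα : α ∈ Set.Ioo (0:ℝ) 1) (hlam : lam ∈ Set.Ioc (0:ℝ) 1)
    (n₀ t : ℕ) (hn₀ : 1 ≤ n₀) (ht : 1 ≤ t) :
    let φ : ℝ → ℝ := fun w => 1 - lam * (1 - w) ^ α
    let lamt : ℝ := lam ^ ((1 - α ^ t) / (1 - α))
    let T : ℕ → ℝ := fun k => (n₀ : ℝ) * ∫ z in (0:ℝ)..1,
      (1 - z) * (iteratedDeriv 2 (φ^[t - k]) z / deriv (φ^[t - k]) z) *
        deriv (φ^[t]) z * (φ^[t] z) ^ (n₀ - 1)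
    (∀ k ≤ t - 1, T k = (1 - α ^ (t - k)) * (1 - (1 - lamt) ^ n₀)) ∧
    T 0 = (1 - (1 - lamt) ^ n₀) * (1 - α ^ t) ∧
    (∀ k ≤ t - 1, (T k - T (k + 1)) / T 0 = α ^ (t - k - 1) * (1 - α) / (1 - α ^ t)) := by
  obtain ⟨hα0, hα1⟩ := hα
  obtain ⟨hlam0, hlam1⟩ := hlam
  intro φ lamt T
  set a : ℕ → ℝ := fun s => α ^ s with ha_def
  set L : ℕ → ℝ := fun s => lam ^ ((1 - α ^ s) / (1 - α)) with hL_def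
  have ha_pos : ∀ s, 0 < a s := fun s => pow_pos hα0 s
  have hL_pos : ∀ s, 0 < L s := fun s => Real.rpow_pos_of_pos hlam0 _
  have hαne : (1:ℝ) - α ≠ 0 := by linarith
  have hn : (n₀:ℝ) ≠ 0 := Nat.cast_ne_zero.2 (by omega)
  -- iterate formula
  have h_iter : ∀ s, ∀ z : ℝ, z ≤ 1 → φ^[s] z = 1 - L s * (1 - z) ^ (a s) := by
    intro s
    induction s with
    | zero =>
      intro z hz
      have h1 : a 0 = 1 := pow_zero α
      have h2 : L 0 = 1 := by
        show lam ^ ((1 - α ^ 0) / (1 - α)) = 1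
        rw [show ((1 - α ^ 0) / (1 - α)) = 0 by simp, Real.rpow_zero]
      rw [h1, h2, Real.rpow_one]
      simp
    | succ s ih =>
      intro z hz
      have h1z : (0:ℝ) ≤ 1 - z := by linarith
      have hnn : 0 ≤ (1 - z) ^ (a s) := Real.rpow_nonneg h1z _
      rw [Function.iterate_succ_apply', ih z hz]
      show 1 - lam * (1 - (1 - L s * (1 - z) ^ (a s))) ^ α = _
      rw [show (1:ℝ) - (1 - L s * (1 - z) ^ (a s)) = L s * (1 - z) ^ (a s) by ring]
      rw [Real.mul_rpow (hL_pos s).le hnn]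
      have e1 : (L s) ^ α = lam ^ ((1 - α ^ s) / (1 - α) * α) := by
        rw [← Real.rpow_mul hlam0.le]
      have e2 : ((1 - z) ^ (a s)) ^ α = (1 - z) ^ (a (s+1)) := by
        rw [← Real.rpow_mul h1z, show a s * α = a (s+1) from (pow_succ α s).symm]
      rw [e1, e2]
      have e3 : lam * lam ^ ((1 - α ^ s) / (1 - α) * α) = L (s+1) := by
        show _ = lam ^ ((1 - α ^ (s+1)) / (1 - α))
        rw [show ((1 - α ^ (s+1)) / (1 - α)) = 1 + (1 - α ^ s) / (1 - α) * α by
          field_simp; ring, Real.rpow_add hlam0, Real.rpow_one]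
      rw [← e3]
      ring
  -- derivative of iterates
  have h_hasDeriv : ∀ s, ∀ z ∈ Set.Ioo (0:ℝ) 1,
      HasDerivAt (φ^[s]) (a s * L s * (1 - z) ^ (a s - 1)) z := by
    intro s z hz
    have h1z : (0:ℝ) < 1 - z := by linarith [hz.2]
    have hbase : HasDerivAt (fun w : ℝ => 1 - w) (-1) z := by
      simpa using (hasDerivAt_id z).const_sub 1
    have h2 : HasDerivAt (fun w : ℝ => (1 - w) ^ (a s))
        (-1 * a s * (1 - z) ^ (a s - 1)) z :=
      hbase.rpow_const (Or.inl h1z.ne')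
    have h3 : HasDerivAt (fun w : ℝ => 1 - L s * (1 - w) ^ (a s))
        (-(L s * (-1 * a s * (1 - z) ^ (a s - 1)))) z :=
      ((h2.const_mul (L s)).const_sub 1)
    have heq : φ^[s] =ᶠ[nhds z] fun w => 1 - L s * (1 - w) ^ (a s) :=
      Filter.eventuallyEq_of_mem (Ioo_mem_nhds hz.1 hz.2)
        (fun w hw => h_iter s w hw.2.le)
    have h4 := h3.congr_of_eventuallyEq heq
    refine h4.congr_deriv ?_
    ring
  have h_deriv_eq : ∀ s, ∀ z ∈ Set.Ioo (0:ℝ) 1,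
      deriv (φ^[s]) z = a s * L s * (1 - z) ^ (a s - 1) :=
    fun s z hz => (h_hasDeriv s z hz).deriv
  -- second derivative
  have h_iter2 : ∀ s, ∀ z ∈ Set.Ioo (0:ℝ) 1,
      iteratedDeriv 2 (φ^[s]) z = a s * L s * (1 - a s) * (1 - z) ^ (a s - 2) := by
    intro s z hz
    have h1z : (0:ℝ) < 1 - z := by linarith [hz.2]
    have heq : deriv (φ^[s]) =ᶠ[nhds z] fun w => a s * L s * (1 - w) ^ (a s - 1) :=
      Filter.eventuallyEq_of_mem (Ioo_mem_nhds hz.1 hz.2)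
        (fun w hw => (h_hasDeriv s w hw).deriv)
    have hbase : HasDerivAt (fun w : ℝ => 1 - w) (-1) z := by
      simpa using (hasDerivAt_id z).const_sub 1
    have h2 : HasDerivAt (fun w : ℝ => (1 - w) ^ (a s - 1))
        (-1 * (a s - 1) * (1 - z) ^ (a s - 1 - 1)) z :=
      hbase.rpow_const (Or.inl h1z.ne')
    have h3 := h2.const_mul (a s * L s)
    have h5 : iteratedDeriv 2 (φ^[s]) z = deriv (deriv (φ^[s])) z := by
      rw [show (2:ℕ) = 1 + 1 from rfl, iteratedDeriv_succ, iteratedDeriv_one]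
    rw [h5, heq.deriv_eq, h3.deriv, show a s - 1 - 1 = a s - 2 by ring]
    ring
  -- the core integrand
  set g : ℝ → ℝ := fun z => a t * L t *
      ((1 - z) ^ (a t - 1) * (1 - L t * (1 - z) ^ (a t)) ^ (n₀ - 1)) with hg_def
  have hcont_pow : Continuous (fun z : ℝ => (1 - z) ^ (a t)) := by
    rw [continuous_iff_continuousAt]
    intro x
    exact (Real.continuousAt_rpow_const _ _ (Or.inr (ha_pos t).le)).comp
      ((continuous_const.sub continuous_id).continuousAt)
  have hig : IntervalIntegrable g volume 0 1 := by
    have h1 : IntervalIntegrable (fun x : ℝ => x ^ (a t - 1)) volume 0 1 :=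
      intervalIntegral.intervalIntegrable_rpow' (by linarith [ha_pos t])
    have h2 : IntervalIntegrable (fun x : ℝ => (1 - x) ^ (a t - 1)) volume 0 1 := by
      have h := h1.comp_sub_left 1
      norm_num at h
      exact h.symm
    have hcont2 : Continuous (fun z : ℝ => (1 - L t * (1 - z) ^ (a t)) ^ (n₀ - 1)) :=
      (continuous_const.sub (continuous_const.mul hcont_pow)).pow (n₀ - 1)
    have h3 : IntervalIntegrable
        (fun z : ℝ => (1 - z) ^ (a t - 1) * (1 - L t * (1 - z) ^ (a t)) ^ (n₀ - 1))
        volume 0 1 := h2.mul_continuousOn hcont2.continuousOn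
    exact h3.const_mul _
  set F : ℝ → ℝ := fun z => (1 - L t * (1 - z) ^ (a t)) ^ n₀ / n₀ with hF_def
  have hFc : Continuous F :=
    ((continuous_const.sub (continuous_const.mul hcont_pow)).pow n₀).div_const _
  have hFd : ∀ z ∈ Set.Ioo (0:ℝ) 1, HasDerivAt F (g z) z := by
    intro z hz
    have h1z : (0:ℝ) < 1 - z := by linarith [hz.2]
    have hbase : HasDerivAt (fun w : ℝ => 1 - w) (-1) z := by
      simpa using (hasDerivAt_id z).const_sub 1
    have h2 : HasDerivAt (fun w : ℝ => (1 - w) ^ (a t))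
        (-1 * a t * (1 - z) ^ (a t - 1)) z :=
      hbase.rpow_const (Or.inl h1z.ne')
    have h3 : HasDerivAt (fun w : ℝ => 1 - L t * (1 - w) ^ (a t))
        (-(L t * (-1 * a t * (1 - z) ^ (a t - 1)))) z :=
      (h2.const_mul (L t)).const_sub 1
    have h4 := (h3.pow n₀).div_const (n₀ : ℝ)
    refine h4.congr_deriv ?_
    symm
    rw [hg_def]
    rw [eq_div_iff hn]
    have hcast : ((n₀:ℕ):ℝ) = (n₀:ℝ) := rfl
    push_cast
    ring
  have hFTC : ∫ z in (0:ℝ)..1, g z = 1 / n₀ - (1 - L t) ^ n₀ / n₀ := by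
    have h := intervalIntegral.integral_eq_sub_of_hasDeriv_right_of_le zero_le_one
      hFc.continuousOn (fun z hz => (hFd z hz).hasDerivWithinAt) hig
    rw [h]
    have h0 : ((1:ℝ) - 1) ^ (a t) = 0 := by
      rw [sub_self, Real.zero_rpow (ha_pos t).ne']
    have h1 : ((1:ℝ) - 0) ^ (a t) = 1 := by
      rw [sub_zero, Real.one_rpow]
    rw [hF_def]
    simp [Real.zero_rpow (ha_pos t).ne', Real.one_rpow, one_div]
  -- main formula
  have hmain : ∀ k, k ≤ t → T k = (1 - α ^ (t - k)) * (1 - (1 - lamt) ^ n₀) := by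
    intro k hk
    have hae : ∀ᵐ z ∂(volume : Measure ℝ), z ∈ Set.uIoc (0:ℝ) 1 →
        (1 - z) * (iteratedDeriv 2 (φ^[t - k]) z / deriv (φ^[t - k]) z) *
          deriv (φ^[t]) z * (φ^[t] z) ^ (n₀ - 1) = (1 - a (t - k)) * g z := by
      have hone : ∀ᵐ z : ℝ ∂(volume : Measure ℝ), z ≠ 1 := by
        have hs : {z : ℝ | ¬ z ≠ 1} = {1} := by ext w; simp
        rw [ae_iff, hs]
        exact measure_singleton 1
      filter_upwards [hone] with z hz1 hz
      rw [Set.uIoc_of_le (zero_le_one)] at hz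
      have hzo : z ∈ Set.Ioo (0:ℝ) 1 := ⟨hz.1, lt_of_le_of_ne hz.2 hz1⟩
      have h1z : (0:ℝ) < 1 - z := by linarith [hzo.2]
      rw [h_iter2 (t - k) z hzo, h_deriv_eq (t - k) z hzo, h_deriv_eq t z hzo,
        h_iter t z hzo.2.le, hg_def]
      have hr2 : (1 - z) ^ (a (t - k) - 2) = (1 - z) ^ (a (t - k) - 1) / (1 - z) := by
        rw [show a (t - k) - 2 = (a (t - k) - 1) - 1 by ring, Real.rpow_sub h1z,
          Real.rpow_one]
      rw [hr2]
      have hne1 : (1 - z) ^ (a (t - k) - 1) ≠ 0 := (Real.rpow_pos_of_pos h1z _).ne'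
      field_simp [(ha_pos (t - k)).ne', (hL_pos (t - k)).ne']
    have hTk : T k = (n₀ : ℝ) * ∫ z in (0:ℝ)..1,
        (1 - z) * (iteratedDeriv 2 (φ^[t - k]) z / deriv (φ^[t - k]) z) *
          deriv (φ^[t]) z * (φ^[t] z) ^ (n₀ - 1) := rfl
    rw [hTk, intervalIntegral.integral_congr_ae hae,
      intervalIntegral.integral_const_mul, hFTC]
    show (n₀:ℝ) * ((1 - a (t - k)) * (1 / n₀ - (1 - L t) ^ n₀ / n₀))
        = (1 - a (t - k)) * (1 - (1 - L t) ^ n₀)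
    field_simp
  have hαt : α ^ t < 1 := pow_lt_one₀ hα0.le hα1 (by omega)
  have hSpos : 0 < 1 - (1 - lamt) ^ n₀ := by
    have hle : lamt ≤ 1 := Real.rpow_le_one hlam0.le hlam1
      (div_nonneg (by linarith) (by linarith))
    have hpos : 0 < lamt := Real.rpow_pos_of_pos hlam0 _
    have : (1 - lamt) ^ n₀ < 1 := pow_lt_one₀ (by linarith) (by linarith) (by omega)
    linarith
  refine ⟨fun k hk => hmain k (le_trans hk (Nat.sub_le t 1)), ?_, ?_⟩
  · rw [hmain 0 (Nat.zero_le t), Nat.sub_zero]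
    ring
  · intro k hk
    have hk1 : k + 1 ≤ t := by omega
    rw [hmain k (by omega), hmain (k+1) hk1, hmain 0 (Nat.zero_le t), Nat.sub_zero]
    have h2 : t - (k+1) = t - k - 1 := by omega
    have hts : t - k = (t - k - 1) + 1 := by omega
    rw [h2, hts, pow_succ]
    simp only [Nat.add_sub_cancel]
    have hne : (1:ℝ) - α ^ t ≠ 0 := by linarith
    field_simp
    ring
end

section
/- For the Sibuya BGW process with one founder (φ(z) = 1−λ(1−z)^α), the TMRCA of the whole population conditioned on size i satisfies P(τ_{i,1}^{(t)}(1) ≥ k | N_t(1) = i) = [1−α^{t−k}]_{i−1}/[1−α^t]_{i−1} for i ≥ 1 and 0 ≤ k ≤ t−1, where [a]_j is the rising factorial. -/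
set_option maxHeartbeats 1000000
open Real Set Filter Topology
namespace Stmt18


noncomputable def mu (α lam : ℝ) : ℕ → ℝ
  | 0 => 1
  | (s+1) => mu α lam s * lam ^ (α ^ s)

variable {α lam : ℝ}

lemma mu_pos (hl : 0 < lam) : ∀ s, 0 < mu α lam s
  | 0 => one_pos
  | (s+1) => mul_pos (mu_pos hl s) (rpow_pos_of_pos hl _)

lemma mu_le_one (hl0 : 0 < lam) (hl1 : lam ≤ 1) (hα : 0 < α) : ∀ s, mu α lam s ≤ 1
  | 0 => le_refl 1
  | (s+1) => by
      have h1 : lam ^ (α ^ s) ≤ 1 :=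
        Real.rpow_le_one (le_of_lt hl0) hl1 (le_of_lt (pow_pos hα s))
      have := mu_le_one hl0 hl1 hα s
      calc mu α lam s * lam ^ (α ^ s) ≤ 1 * 1 :=
            mul_le_mul this h1 (le_of_lt (rpow_pos_of_pos hl0 _)) zero_le_one
        _ = 1 := one_mul 1

lemma mu_add (hl : 0 < lam) (a : ℕ) : ∀ b, mu α lam (a + b) = mu α lam a * (mu α lam b) ^ ((α:ℝ) ^ a)
  | 0 => by simp [mu, Real.one_rpow]
  | (b+1) => by
      have hmb : (0:ℝ) ≤ mu α lam b := (mu_pos hl b).le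
      have : a + (b+1) = (a + b) + 1 := by ring
      rw [this]
      show mu α lam (a+b) * lam ^ (α ^ (a+b)) = _
      rw [mu_add hl a b]
      show _ = mu α lam a * (mu α lam b * lam ^ (α ^ b)) ^ ((α:ℝ) ^ a)
      rw [Real.mul_rpow hmb (Real.rpow_nonneg hl.le _), ← Real.rpow_mul hl.le, ← pow_add,
        Nat.add_comm b a, mul_assoc]


/-- Closed form of the iterate on `Iic 1`. -/
lemma iterate_eq (hl : 0 < lam) (hα : 0 < α) {z : ℝ} (hz : z ≤ 1) :
    ∀ s, (fun w => 1 - lam * (1 - w) ^ α)^[s] z = 1 - mu α lam s * (1 - z) ^ ((α:ℝ) ^ s)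
  | 0 => by simp [mu, Real.rpow_one]
  | (s+1) => by
      have h1z : (0:ℝ) ≤ 1 - z := by linarith
      have hfz : (1 : ℝ) - lam * (1 - z) ^ α ≤ 1 := by
        have : (0:ℝ) ≤ lam * (1-z)^α := mul_nonneg hl.le (Real.rpow_nonneg h1z _)
        linarith
      rw [Function.iterate_succ_apply]
      show (fun w => 1 - lam * (1 - w) ^ α)^[s] (1 - lam * (1 - z) ^ α) = _
      rw [iterate_eq hl hα hfz s]
      have h2 : 1 - (1 - lam * (1 - z) ^ α) = lam * (1-z)^α := by ring
      rw [h2, Real.mul_rpow hl.le (Real.rpow_nonneg h1z _),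
        ← Real.rpow_mul h1z, ← pow_succ']
      show _ = 1 - mu α lam s * lam ^ (α^s) * (1-z) ^ (α ^ (s+1))
      ring


/-- rising factorial `[1-β]_n` -/
noncomputable def E (β : ℝ) (n : ℕ) : ℝ := ∏ j ∈ Finset.range n, (1 - β + j)

/-- `n`-th derivative of `z ↦ 1 - μ(1-z)^β` -/
noncomputable def D (μ β : ℝ) (n : ℕ) (z : ℝ) : ℝ :=
  if n = 0 then 1 - μ * (1-z)^β else μ * β * E β (n-1) * (1-z)^(β - n)

variable {μ β : ℝ}

lemma hasDerivAt_D {z : ℝ} (hz : z < 1) (n : ℕ) :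
    HasDerivAt (D μ β n) (D μ β (n+1) z) z := by
  have h1 : HasDerivAt (fun w : ℝ => 1 - w) (-1) z := (hasDerivAt_id z).const_sub 1
  have hne : (1:ℝ) - z ≠ 0 := by intro h; nlinarith [h]
  match n with
  | 0 =>
    have h2 := (h1.rpow_const (p := β) (Or.inl hne)).const_mul μ
    have h3 : HasDerivAt (fun x : ℝ => 1 - μ * (1 - x) ^ β) _ z := h2.const_sub 1
    convert h3 using 1
    · funext y; simp [D]
    simp only [D, E, Finset.range_zero, Finset.prod_empty]
    norm_num
    ring
  | (n+1) =>
    have h2 : HasDerivAt (fun y : ℝ => μ * β * E β n * (1 - y) ^ (β - (n+1:ℕ))) _ z :=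
      (h1.rpow_const (p := β - (n+1:ℕ)) (Or.inl hne)).const_mul (μ * β * E β n)
    convert h2 using 1
    · funext y; simp [D, E]
    simp only [D, E]
    have h3 : (n+1+1) - 1 = n+1 := by omega
    rw [h3, Finset.prod_range_succ]
    have he : β - ((n:ℝ)+1+1) = β - ((n:ℝ)+1) - 1 := by ring
    push_cast
    rw [he]
    ring

lemma contDiffAt_D0 {z : ℝ} (hz : z < 1) (m : WithTop ℕ∞) : ContDiffAt ℝ m (D μ β 0) z := by
  have hne : (1:ℝ) - z ≠ 0 := by intro h; nlinarith [h]
  have h1 : ContDiffAt ℝ m (fun w : ℝ => 1 - w) z := (contDiff_const.sub contDiff_id).contDiffAt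
  have h2 : ContDiffAt ℝ m (fun w : ℝ => (1 - w) ^ β) z :=
    (Real.contDiffAt_rpow_const_of_ne hne).comp z h1
  have h3 : ContDiffAt ℝ m (fun w : ℝ => 1 - μ * (1 - w) ^ β) z :=
    contDiffAt_const.sub (contDiffAt_const.mul h2)
  exact h3

lemma iteratedDerivWithin_D0 {x : ℝ} (hx0 : 0 < x) (hx1 : x < 1) :
    ∀ m, ∀ y ∈ Icc (0:ℝ) x, iteratedDerivWithin m (D μ β 0) (Icc 0 x) y = D μ β m y := by
  intro m
  induction m with
  | zero => intro y hy; simp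
  | succ n ih =>
    intro y hy
    have hux : UniqueDiffWithinAt ℝ (Icc (0:ℝ) x) y := (uniqueDiffOn_Icc hx0) y hy
    rw [iteratedDerivWithin_succ, derivWithin_congr ih (ih y hy)]
    exact ((hasDerivAt_D (lt_of_le_of_lt hy.2 hx1) n).hasDerivWithinAt).derivWithin hux

lemma taylor_step (hμ0 : 0 < μ) {N : ℕ} (hN : 1 ≤ N) {x : ℝ} (hx0 : 0 < x) (hx1 : x < 1) :
    ∃ ξ ∈ Ioo 0 x, (1 - μ * (1-x)^β)
        - ∑ m ∈ Finset.range N, (D μ β m 0 / m.factorial) * x ^ m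
      = D μ β N ξ * x ^ N / N.factorial := by
  have hIcc : ∀ y ∈ Icc (0:ℝ) x, y < 1 := fun y hy => lt_of_le_of_lt hy.2 hx1
  have hcd : ContDiffOn ℝ (N-1 : ℕ) (D μ β 0) (Icc 0 x) :=
    fun y hy => (contDiffAt_D0 (hIcc y hy) _).contDiffWithinAt
  have hdiff : DifferentiableOn ℝ (iteratedDerivWithin (N-1) (D μ β 0) (Icc 0 x)) (Ioo 0 x) := by
    intro y hy
    have hyI : y ∈ Icc (0:ℝ) x := Ioo_subset_Icc_self hy
    exact ((((hasDerivAt_D (hIcc y hyI) (N-1)).hasDerivWithinAt).congr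
      (fun w hw => iteratedDerivWithin_D0 hx0 hx1 (N-1) w hw)
      (iteratedDerivWithin_D0 hx0 hx1 (N-1) y hyI)).differentiableWithinAt).mono
      Ioo_subset_Icc_self
  obtain ⟨ξ, hξ, heq⟩ := taylor_mean_remainder_lagrange hx0.ne (by rwa [uIcc_of_le hx0.le])
    (by rwa [uIcc_of_le hx0.le, uIoo_of_le hx0.le])
  rw [uIoo_of_le hx0.le] at hξ
  rw [uIcc_of_le hx0.le] at heq
  refine ⟨ξ, hξ, ?_⟩
  have hNN : N - 1 + 1 = N := by omega
  rw [hNN] at heq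
  have hξI : ξ ∈ Icc (0:ℝ) x := Ioo_subset_Icc_self hξ
  rw [iteratedDerivWithin_D0 hx0 hx1 N ξ hξI] at heq
  rw [taylor_within_apply, hNN] at heq
  have hD0 : D μ β 0 x = 1 - μ * (1-x)^β := by simp [D]
  rw [hD0] at heq
  convert heq using 2
  · apply Finset.sum_congr rfl
    intro k hk
    rw [iteratedDerivWithin_D0 hx0 hx1 k 0 (by constructor <;> [rfl; exact hx0.le] )]
    rw [sub_zero, smul_eq_mul]
    ring
  · rw [sub_zero]

lemma coeff_eq (hβ0 : 0 < β) (hβ1 : β ≤ 1) (hμ0 : 0 < μ) (p : ℕ → ℝ)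
    (hp0 : ∀ n, 0 ≤ p n) (hp1 : ∀ n, p n ≤ 1) (hsum : Summable p)
    (hFG : ∀ z ∈ Icc (0:ℝ) 1, (∑' n, p n * z ^ n) = 1 - μ * (1-z)^β) :
    ∀ n, p n = D μ β n 0 / n.factorial := by
  intro n
  induction n using Nat.strong_induction_on with
  | _ n ih =>
  match n with
  | 0 =>
    have h0 := hFG 0 (by constructor <;> norm_num)
    rw [tsum_eq_single 0 (by intro b hb; simp [zero_pow hb])] at h0
    simpa [D] using h0
  | (N+1) =>
    set N' := N + 1 with hN'
    have hN1 : 1 ≤ N' := by omega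
    set c : ℕ → ℝ := fun m => D μ β m 0 / m.factorial with hc
    -- key inequality for x ∈ Ioc 0 (1/2)
    have key : ∀ x ∈ Ioc (0:ℝ) (1/2),
        |p N' - c N'| ≤ 2*x + |μ * β * E β (N'-1)| / N'.factorial * ((1-x)^(β - N') - 1) := by
      intro x hx
      obtain ⟨hx0, hx12⟩ := hx
      have hx1 : x < 1 := lt_of_le_of_lt hx12 (by norm_num)
      have hx01 : x ∈ Icc (0:ℝ) 1 := ⟨hx0.le, hx1.le⟩
      -- summability
      have hsx : Summable (fun m => p m * x ^ m) := by
        apply Summable.of_nonneg_of_le (fun m => mul_nonneg (hp0 m) (pow_nonneg hx0.le m))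
          (fun m => ?_) hsum
        calc p m * x ^ m ≤ p m * 1 := by
              apply mul_le_mul_of_nonneg_left _ (hp0 m)
              exact pow_le_one₀ hx0.le hx1.le
          _ = p m := mul_one _
      -- split the tsum
      have hsplit : (∑' m, p m * x ^ m)
          = ∑ m ∈ Finset.range N', p m * x ^ m + x ^ N' * ∑' j, p (j + N') * x ^ j := by
        rw [← Summable.sum_add_tsum_nat_add N' hsx]
        congr 1
        rw [← tsum_mul_left]
        apply tsum_congr
        intro j
        show p (j + N') * x ^ (j + N') = x ^ N' * (p (j + N') * x ^ j)
        rw [pow_add]; ring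
      -- tail lemma
      have hgeo : Summable (fun j : ℕ => x ^ j) := summable_geometric_of_lt_one hx0.le hx1
      have hsxt : Summable (fun j => p (j + N') * x ^ j) := by
        apply Summable.of_nonneg_of_le (fun j => mul_nonneg (hp0 _) (pow_nonneg hx0.le j))
          (fun j => ?_) hgeo
        calc p (j + N') * x ^ j ≤ 1 * x ^ j :=
              mul_le_mul_of_nonneg_right (hp1 _) (pow_nonneg hx0.le j)
          _ = x ^ j := one_mul _
      have htail : |(∑' j, p (j + N') * x ^ j) - p N'| ≤ 2*x := by
        have h1 : (∑' j, p (j + N') * x ^ j)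
            = p N' + ∑' j, p (j + 1 + N') * x ^ (j + 1) := by
          rw [← Summable.sum_add_tsum_nat_add 1 hsxt]
          congr 1
          simp
        rw [h1, add_sub_cancel_left]
        have hb : ∀ j : ℕ, |p (j + 1 + N') * x ^ (j+1)| ≤ x * x ^ j := by
          intro j
          rw [abs_of_nonneg (mul_nonneg (hp0 _) (pow_nonneg hx0.le _))]
          calc p (j + 1 + N') * x ^ (j+1) ≤ 1 * x ^ (j+1) :=
                mul_le_mul_of_nonneg_right (hp1 _) (pow_nonneg hx0.le _)
            _ = x * x ^ j := by ring
        have hs2 : Summable (fun j : ℕ => x * x ^ j) := hgeo.mul_left x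
        have hsabs : Summable (fun j => |p (j + 1 + N') * x ^ (j+1)|) :=
          hs2.of_nonneg_of_le (fun j => abs_nonneg _) (fun j => hb j)
        calc |∑' j, p (j + 1 + N') * x ^ (j+1)| ≤ ∑' j, |p (j + 1 + N') * x ^ (j+1)| := by
              have := norm_tsum_le_tsum_norm (f := fun j => p (j + 1 + N') * x ^ (j+1))
                (by simpa only [Real.norm_eq_abs] using hsabs)
              simpa only [Real.norm_eq_abs] using this
          _ ≤ ∑' j, x * x ^ j := Summable.tsum_le_tsum (fun j => hb j) hsabs hs2
          _ = x * (1-x)⁻¹ := by rw [tsum_mul_left, tsum_geometric_of_lt_one hx0.le hx1]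
          _ ≤ 2 * x := by
              rw [mul_comm]
              apply mul_le_mul_of_nonneg_right _ hx0.le
              rw [inv_le_comm₀ (by linarith) (by norm_num)]
              linarith
      -- Taylor
      obtain ⟨ξ, hξ, hT⟩ := taylor_step (β := β) hμ0 hN1 hx0 hx1
      -- combine with hFG
      have hFGx := hFG x hx01
      have hprev : ∑ m ∈ Finset.range N', p m * x ^ m = ∑ m ∈ Finset.range N', c m * x ^ m := by
        apply Finset.sum_congr rfl
        intro m hm
        rw [ih m (Finset.mem_range.mp hm)]
      have hxN : (x:ℝ) ^ N' ≠ 0 := pow_ne_zero _ hx0.ne'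
      have hR : (∑' j, p (j + N') * x ^ j) = D μ β N' ξ / N'.factorial := by
        have e1 : x ^ N' * (∑' j, p (j + N') * x ^ j) = D μ β N' ξ * x ^ N' / N'.factorial := by
          have := hsplit.symm.trans (hFGx.trans (by linarith [hT] : (1:ℝ) - μ * (1-x)^β
            = ∑ m ∈ Finset.range N', c m * x ^ m + D μ β N' ξ * x ^ N' / N'.factorial))
          rw [hprev] at this
          linarith [this]
        have e3 : x ^ N' * (∑' j, p (j + N') * x ^ j)
            = x ^ N' * (D μ β N' ξ / N'.factorial) := by rw [e1]; ring
        exact mul_left_cancel₀ hxN e3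
      -- bound |D N' ξ - D N' 0|
      have hξ0 : 0 < ξ := hξ.1
      have hξx : ξ < x := hξ.2
      have h1ξ : (0:ℝ) < 1 - ξ := by linarith
      have hexp : β - (N':ℝ) ≤ 0 := by
        have : (1:ℝ) ≤ (N':ℝ) := by exact_mod_cast hN1
        linarith
      have hmono1 : (1:ℝ) ≤ (1-ξ) ^ (β - N') := by
        calc (1:ℝ) = (1:ℝ) ^ (β - (N':ℝ)) := (Real.one_rpow _).symm
          _ ≤ (1-ξ) ^ (β - N') := Real.rpow_le_rpow_of_nonpos h1ξ (by linarith) hexp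
      have hmono2 : (1-ξ) ^ (β - (N':ℝ)) ≤ (1-x) ^ (β - (N':ℝ)) :=
        Real.rpow_le_rpow_of_nonpos (by linarith) (by linarith) hexp
      have hDdiff : |D μ β N' ξ - D μ β N' 0| ≤ |μ * β * E β (N'-1)| * ((1-x)^(β - N') - 1) := by
        have hD1 : D μ β N' ξ = μ * β * E β (N'-1) * (1-ξ) ^ (β - N') := by
          simp only [D, if_neg (by omega : ¬ N' = 0)]
        have hD2 : D μ β N' 0 = μ * β * E β (N'-1) := by
          simp only [D, if_neg (by omega : ¬ N' = 0)]
          rw [sub_zero, Real.one_rpow, mul_one]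
        rw [hD1, hD2]
        have e : μ * β * E β (N'-1) * (1-ξ) ^ (β - (N':ℝ)) - μ * β * E β (N'-1)
            = (μ * β * E β (N'-1)) * ((1-ξ) ^ (β - (N':ℝ)) - 1) := by ring
        rw [e, abs_mul]
        apply mul_le_mul_of_nonneg_left _ (abs_nonneg _)
        rw [abs_of_nonneg (by linarith)]
        linarith
      -- conclude
      have hcN : c N' = D μ β N' 0 / N'.factorial := rfl
      have hfacpos : (0:ℝ) < N'.factorial := by exact_mod_cast Nat.factorial_pos N'
      calc |p N' - c N'| ≤ |p N' - (∑' j, p (j + N') * x ^ j)|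
            + |(∑' j, p (j + N') * x ^ j) - c N'| := abs_sub_le _ _ _
        _ ≤ 2*x + |μ * β * E β (N'-1)| / N'.factorial * ((1-x)^(β - N') - 1) := by
            apply add_le_add
            · rw [abs_sub_comm]; exact htail
            · rw [hR, hcN, div_sub_div_same, abs_div, abs_of_nonneg hfacpos.le, div_mul_eq_mul_div]
              gcongr
    -- now take the limit x → 0+
    have habs : |p N' - c N'| ≤ 0 := by
      set C := |μ * β * E β (N'-1)| / N'.factorial with hC
      have hcont : ContinuousAt (fun x : ℝ => 2*x + C * ((1-x)^(β - (N':ℝ)) - 1)) 0 := by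
        have h1 : ContinuousAt (fun x : ℝ => 1 - x) 0 :=
          (continuous_const.sub continuous_id).continuousAt
        have h2 : ContinuousAt (fun y : ℝ => y ^ (β - (N':ℝ))) ((1:ℝ) - 0) :=
          Real.continuousAt_rpow_const _ _ (Or.inl (by norm_num))
        exact ((continuous_const.mul continuous_id).continuousAt).add
          (continuousAt_const.mul ((h2.comp h1).sub continuousAt_const))
      have htends : Tendsto (fun x : ℝ => 2*x + C * ((1-x)^(β - (N':ℝ)) - 1)) (𝓝[>] (0:ℝ)) (𝓝 0) := by
        have h := (hcont.continuousWithinAt (s := Set.Ioi (0:ℝ))).tendsto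
        simpa [Real.one_rpow] using h
      apply ge_of_tendsto htends
      filter_upwards [Ioc_mem_nhdsGT_of_mem (by norm_num : (0:ℝ) ∈ Ico (0:ℝ) (1/2))] with x hx
      exact key x hx
    have := abs_nonneg (p N' - c N')
    have : p N' - c N' = 0 := abs_eq_zero.mp (le_antisymm habs this)
    have : p N' = c N' := by linarith
    exact this



lemma E_pos {β : ℝ} (hβ : β < 1) (n : ℕ) : 0 < E β n := by
  apply Finset.prod_pos
  intro j _
  have : (0:ℝ) ≤ j := Nat.cast_nonneg j
  linarith

end Stmt18

open Stmt18 Set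

/-- Sibuya BGW, one founder, laws `ν s` of `N_s(1)` with pgf the
`s`-iterate of `φ(z) = 1-λ(1-z)^α`.  For `i ≥ 1`, `0 ≤ k ≤ t-1`,
`P(τ_{i,1}^{(t)}(1) ≥ k | N_t(1)=i) = φ_k'(P(N_{t-k}=0)) P(N_{t-k}=i)/P(N_t=i)
  = [1-α^{t-k}]_{i-1} / [1-α^t]_{i-1}` (rising factorials). -/
theorem stmt_18 (α lam : ℝ) (hα : α ∈ Set.Ioo (0:ℝ) 1) (hlam : lam ∈ Set.Ioc (0:ℝ) 1)
    (t k i : ℕ) (ht : 1 ≤ t) (hk : k ≤ t - 1) (hi : 1 ≤ i)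
    (ν : ℕ → PMF ℕ)
    (hν : ∀ s : ℕ, ∀ z ∈ Set.Icc (0:ℝ) 1,
      (∑' n : ℕ, (ν s n).toReal * z ^ n) = (fun w => 1 - lam * (1 - w) ^ α)^[s] z) :
    deriv ((fun w => 1 - lam * (1 - w) ^ α)^[k]) ((ν (t - k) 0).toReal) *
        (ν (t - k) i).toReal / (ν t i).toReal
      = (∏ j ∈ Finset.range (i - 1), (1 - α ^ (t - k) + (j : ℝ))) /
          (∏ j ∈ Finset.range (i - 1), (1 - α ^ t + (j : ℝ))) := by
  obtain ⟨hα0, hα1⟩ := hα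
  obtain ⟨hl0, hl1⟩ := hlam
  have hkt : k < t := by omega
  have hks : k + (t - k) = t := by omega
  have htk1 : 1 ≤ t - k := by omega
  -- coefficients of each ν s
  have pval : ∀ s n, (ν s n).toReal = D (mu α lam s) (α^s) n 0 / n.factorial := by
    intro s
    apply coeff_eq (pow_pos hα0 s) (pow_le_one₀ hα0.le hα1.le) (mu_pos hl0 s)
    · intro n; exact ENNReal.toReal_nonneg
    · intro n
      have h := PMF.coe_le_one (ν s) n
      simpa using ENNReal.toReal_mono ENNReal.one_ne_top h
    · exact ENNReal.summable_toReal (by rw [(ν s).tsum_coe]; exact ENNReal.one_ne_top)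
    · intro z hz
      rw [hν s z hz, iterate_eq hl0 hα0 hz.2 s]
  have hmu_tk := mu_pos (α := α) hl0 (t - k)
  have hmu_k := mu_pos (α := α) hl0 k
  have hmu_t := mu_pos (α := α) hl0 t
  -- value at 0
  have hz0 : (ν (t - k) 0).toReal = 1 - mu α lam (t - k) := by
    rw [pval (t-k) 0]
    simp [D]
  -- values at i
  have hDi : ∀ s, D (mu α lam s) (α^s) i 0 = mu α lam s * α^s * E (α^s) (i-1) := by
    intro s
    simp only [D, if_neg (by omega : ¬ i = 0), sub_zero, Real.one_rpow, mul_one]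
  -- derivative
  have hz0lt : (1:ℝ) - mu α lam (t-k) < 1 := by linarith
  have hder : deriv ((fun w => 1 - lam * (1 - w) ^ α)^[k]) ((ν (t - k) 0).toReal)
      = mu α lam k * α^k * (mu α lam (t-k)) ^ ((α:ℝ)^k - 1) := by
    rw [hz0]
    have heq : (fun w => 1 - lam * (1 - w) ^ α)^[k]
        =ᶠ[nhds (1 - mu α lam (t-k))] (D (mu α lam k) (α^k) 0) := by
      filter_upwards [Iio_mem_nhds hz0lt] with z hz
      rw [iterate_eq hl0 hα0 (le_of_lt hz) k]
      simp [D]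
    rw [heq.deriv_eq]
    rw [(hasDerivAt_D hz0lt 0).deriv]
    simp only [D, E, if_neg (by omega : ¬ (0+1) = 0)]
    norm_num
  -- assemble
  rw [hder, pval (t-k) i, pval t i, hDi, hDi]
  -- key exponents
  have hmul : mu α lam k * (mu α lam (t-k)) ^ ((α:ℝ)^k) = mu α lam t := by
    rw [← mu_add hl0 k (t-k), hks]
  have hrpow : (mu α lam (t-k)) ^ ((α:ℝ)^k - 1) * mu α lam (t-k) = (mu α lam (t-k)) ^ ((α:ℝ)^k) := by
    nth_rewrite 2 [← Real.rpow_one (mu α lam (t-k))]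
    rw [← Real.rpow_add hmu_tk]
    norm_num
  have hαpow : (α:ℝ)^k * α^(t-k) = α^t := by rw [← pow_add, hks]
  have hfac : ((i.factorial : ℝ)) ≠ 0 := Nat.cast_ne_zero.mpr (Nat.factorial_ne_zero i)
  have hαt1 : (α:ℝ)^t < 1 := pow_lt_one₀ hα0.le hα1 (by omega)
  have hαtk1 : (α:ℝ)^(t-k) < 1 := pow_lt_one₀ hα0.le hα1 (by omega)
  have hEt : (0:ℝ) < E (α^t) (i-1) := E_pos hαt1 _
  have hαt0 : (0:ℝ) < α^t := pow_pos hα0 t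
  have hgoalE : (∏ j ∈ Finset.range (i - 1), (1 - α ^ (t-k) + (j : ℝ))) = E (α^(t-k)) (i-1) := rfl
  have hgoalE2 : (∏ j ∈ Finset.range (i - 1), (1 - α ^ t + (j : ℝ))) = E (α^t) (i-1) := rfl
  rw [hgoalE, hgoalE2]
  rw [div_eq_div_iff (by positivity) (ne_of_gt hEt)]
  field_simp
  linear_combination (mu α lam k * α^k * α^(t-k) * E (α^(t-k)) (i-1)) * hrpow
    + (α^k * α^(t-k) * E (α^(t-k)) (i-1)) * hmul
    + (mu α lam t * E (α^(t-k)) (i-1)) * hαpow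
end

section
/- For the Sibuya BGW process with one founder, the coalescence time of the whole surviving generation-t population satisfies P(τ_{N_t(1),1}^{(t)}(1) ≥ k | N_t(1) > 0) = α^k for all 0 ≤ k ≤ t−1; hence P(τ_{N_t(1),1}^{(t)}(1) = k | N_t(1) > 0) = (1−α)α^k for k = 0,...,t−2 and equals α^{t−1} for k = t−1 (a truncated geometric(α) law). -/
open Real Finset

/-- Sibuya BGW, one founder.  With
`E k = [P(N_{t-k}>0)/P(N_t>0)] · φ_k'(P(N_{t-k}=0))` (general formula for
`P(τ_{N_t(1),1}^{(t)}(1) ≥ k | N_t(1)>0)`, where `P(N_s=0)=φ_s(0)`):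
`E k = α^k` for `0 ≤ k ≤ t-1`; hence the masses are `(1-α)α^k` for `k ≤ t-2`
and `α^{t-1}` at `k = t-1` (truncated geometric(α) law). -/
theorem stmt_19 (α lam : ℝ) (hα : α ∈ Set.Ioo (0:ℝ) 1) (hlam : lam ∈ Set.Ioc (0:ℝ) 1)
    (t : ℕ) (ht : 1 ≤ t) :
    let φ : ℝ → ℝ := fun w => 1 - lam * (1 - w) ^ α
    let E : ℕ → ℝ := fun k =>
      ((1 - φ^[t - k] 0) / (1 - φ^[t] 0)) * deriv (φ^[k]) (φ^[t - k] 0)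
    (∀ k ≤ t - 1, E k = α ^ k) ∧
    (∀ k ≤ t - 2, E k - E (k + 1) = (1 - α) * α ^ k) ∧
    E (t - 1) = α ^ (t - 1) := by
  obtain ⟨hα0, hα1⟩ := hα
  obtain ⟨hl0, hl1⟩ := hlam
  intro φ E
  set S : ℕ → ℝ := fun k => ∑ i ∈ Finset.range k, α ^ i with hSdef
  have hlamS : ∀ k, (0:ℝ) < lam ^ S k := fun k => Real.rpow_pos_of_pos hl0 _
  -- closed form for iterates
  have key : ∀ (k : ℕ) (w : ℝ), w < 1 →
      φ^[k] w = 1 - lam ^ S k * (1 - w) ^ (α ^ k) := by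
    intro k
    induction k with
    | zero =>
      intro w hw
      simp [hSdef, Real.rpow_zero, Real.rpow_one]
    | succ n ih =>
      intro w hw
      rw [Function.iterate_succ_apply', ih w hw]
      show 1 - lam * (1 - (1 - lam ^ S n * (1 - w) ^ (α ^ n))) ^ α = _
      have hw' : (0:ℝ) ≤ 1 - w := by linarith
      have h1 : 1 - (1 - lam ^ S n * (1 - w) ^ (α ^ n))
          = lam ^ S n * (1 - w) ^ (α ^ n) := by ring
      rw [h1, Real.mul_rpow (hlamS n).le (Real.rpow_nonneg hw' _),
        ← Real.rpow_natCast α n, ← Real.rpow_mul hl0.le, ← Real.rpow_mul hw']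
      have hS : S (n + 1) = α * S n + 1 := by
        simp [hSdef, geom_sum_succ]
      rw [hS, Real.rpow_add hl0, Real.rpow_one]
      rw [Real.rpow_natCast]
      ring_nf
  have hx : ∀ s : ℕ, φ^[s] 0 = 1 - lam ^ S s := by
    intro s
    rw [key s 0 one_pos]
    simp [Real.one_rpow]
  -- derivative of the iterate at points 1 - lam ^ S s
  have hderiv : ∀ (k s : ℕ),
      deriv (φ^[k]) (1 - lam ^ S s)
        = lam ^ S k * α ^ k * (lam ^ S s) ^ (α ^ k - 1) := by
    intro k s
    set x : ℝ := 1 - lam ^ S s with hxdef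
    have hx1 : x < 1 := by have := hlamS s; simp [hxdef]; linarith
    have heq : φ^[k] =ᶠ[nhds x] fun w => 1 - lam ^ S k * (1 - w) ^ (α ^ k) := by
      filter_upwards [eventually_lt_nhds hx1] with w hw
      exact key k w hw
    rw [heq.deriv_eq]
    have hpos : (0:ℝ) < 1 - x := by simp [hxdef]; exact hlamS s
    have h1 : HasDerivAt (fun w : ℝ => 1 - w) (-1) x := by
      simpa using (hasDerivAt_id x).const_sub 1
    have h2 : HasDerivAt (fun y : ℝ => y ^ (α ^ k))
        ((α ^ k) * (1 - x) ^ (α ^ k - 1)) (1 - x) :=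
      Real.hasDerivAt_rpow_const (Or.inl (ne_of_gt hpos))
    have h3 := h2.comp x h1
    have h4 := (h3.const_mul (lam ^ S k)).const_sub 1
    have h5 : HasDerivAt (fun w : ℝ => 1 - lam ^ S k * (1 - w) ^ (α ^ k))
        (-(lam ^ S k * (α ^ k * (1 - x) ^ (α ^ k - 1) * -1))) x := h4
    rw [h5.deriv]
    have : (1:ℝ) - x = lam ^ S s := by simp [hxdef]
    rw [this]; ring
  -- sum identity
  have hsum : ∀ (k s : ℕ), S (k + s) = S k + α ^ k * S s := by
    intro k s
    induction s with
    | zero => simp [hSdef]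
    | succ n ihn =>
      have : k + (n + 1) = (k + n) + 1 := by ring
      rw [this]
      simp only [hSdef] at ihn ⊢
      rw [Finset.sum_range_succ, ihn, Finset.sum_range_succ]
      rw [pow_add]
      ring
  -- main claim for all k ≤ t
  have main : ∀ k ≤ t, E k = α ^ k := by
    intro k hk
    have hkt : k + (t - k) = t := Nat.add_sub_cancel' hk
    set s := t - k with hs
    have hE : E k = (lam ^ S s / lam ^ S t) *
        (lam ^ S k * α ^ k * (lam ^ S s) ^ (α ^ k - 1)) := by
      show ((1 - φ^[s] 0) / (1 - φ^[t] 0)) * deriv (φ^[k]) (φ^[s] 0) = _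
      rw [hx s, hx t, hderiv k s]
      ring_nf
    have hST : S t = S k + α ^ k * S s := by rw [← hkt]; exact hsum k s
    have hcomb : lam ^ S s * (lam ^ S k * (lam ^ S s) ^ (α ^ k - 1)) = lam ^ S t := by
      rw [← Real.rpow_mul hl0.le, ← Real.rpow_add hl0, ← Real.rpow_add hl0]
      congr 1
      rw [hST]; ring
    have hne : lam ^ S t ≠ 0 := (hlamS t).ne'
    rw [hE]
    field_simp
    linear_combination hcomb
  refine ⟨fun k hk => main k (le_trans hk (Nat.sub_le t 1)), ?_, ?_⟩
  · intro k hk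
    have h1 : k ≤ t := le_trans hk (le_trans (Nat.sub_le t 2) (le_refl t))
    have h2 : k + 1 ≤ t := by omega
    rw [main k h1, main (k + 1) h2]
    ring
  · exact main (t - 1) (Nat.sub_le t 1)
end
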